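/- If u : ℝⁿ → ℝⁿ (n > 1) satisfies d_h(u(x), u(y)) = c·d_h(x,y) for all x, y and some constant c > 0, then c = 1; that is, every dilation of the hyperbolic space (ℝⁿ, d_h), n > 1, is an isometry. -/

import Mathlib

noncomputable def arcosh (t : ℝ) : ℝ := Real.log (t + Real.sqrt (t ^ 2 - 1))

noncomputable def br {n : ℕ} (x : EuclideanSpace ℝ (Fin n)) : ℝ :=
  Real.sqrt (1 + ‖x‖ ^ 2)

noncomputable def dh {n : ℕ} (x y : EuclideanSpace ℝ (Fin n)) : ℝ :=
  arcosh (br x * br y - inner ℝ x y)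

noncomputable def T {n : ℕ} (y x : EuclideanSpace ℝ (Fin n)) : EuclideanSpace ℝ (Fin n) :=
  x + (br x + inner ℝ x y / (br y + 1)) • y

section Aux

variable {n : ℕ}

lemma br_pos (x : EuclideanSpace ℝ (Fin n)) : 0 < br x :=
  Real.sqrt_pos.2 (by positivity)

lemma br_sq (x : EuclideanSpace ℝ (Fin n)) : br x ^ 2 = 1 + ‖x‖ ^ 2 :=
  Real.sq_sqrt (by positivity)

lemma one_le_Q (x y : EuclideanSpace ℝ (Fin n)) :
    1 ≤ br x * br y - (inner ℝ x y : ℝ) := by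
  have h1 : (inner ℝ x y : ℝ) ≤ ‖x‖ * ‖y‖ := real_inner_le_norm x y
  have hx := br_sq x
  have hy := br_sq y
  have hx' := (br_pos x).le
  have hy' := (br_pos y).le
  have hP : (br x * br y) ^ 2 = (1 + ‖x‖ ^ 2) * (1 + ‖y‖ ^ 2) := by
    rw [mul_pow, hx, hy]
  have h2 : 1 + ‖x‖ * ‖y‖ ≤ br x * br y := by
    nlinarith [sq_nonneg (‖x‖ - ‖y‖), mul_nonneg (norm_nonneg x) (norm_nonneg y),
      mul_nonneg hx' hy']
  linarith

lemma cosh_arcosh {t : ℝ} (h : 1 ≤ t) : Real.cosh (arcosh t) = t := by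
  have h1 : 0 ≤ t ^ 2 - 1 := by nlinarith
  have hs := Real.sq_sqrt h1
  have hsn := Real.sqrt_nonneg (t ^ 2 - 1)
  have hE : 0 < t + Real.sqrt (t ^ 2 - 1) := by linarith
  have hinv : (t + Real.sqrt (t ^ 2 - 1))⁻¹ = t - Real.sqrt (t ^ 2 - 1) :=
    inv_eq_of_mul_eq_one_right (by nlinarith)
  rw [arcosh, Real.cosh_eq, Real.exp_neg, Real.exp_log hE, hinv]
  ring

lemma arcosh_nonneg {t : ℝ} (h : 1 ≤ t) : 0 ≤ arcosh t :=
  Real.log_nonneg (by have := Real.sqrt_nonneg (t ^ 2 - 1); linarith)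

lemma cosh_dh (x y : EuclideanSpace ℝ (Fin n)) :
    Real.cosh (dh x y) = br x * br y - (inner ℝ x y : ℝ) :=
  cosh_arcosh (one_le_Q x y)

lemma dh_nonneg (x y : EuclideanSpace ℝ (Fin n)) : 0 ≤ dh x y :=
  arcosh_nonneg (one_le_Q x y)

lemma cosh_inj_nonneg {a b : ℝ} (ha : 0 ≤ a) (hb : 0 ≤ b)
    (h : Real.cosh a = Real.cosh b) : a = b := by
  have h1 := Real.cosh_le_cosh.1 h.le
  have h2 := Real.cosh_le_cosh.1 h.ge
  rw [abs_of_nonneg ha, abs_of_nonneg hb] at h1 h2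
  linarith

lemma dh_eq_of_cosh {x y : EuclideanSpace ℝ (Fin n)} {r : ℝ} (hr : 0 ≤ r)
    (h : Real.cosh (dh x y) = Real.cosh r) : dh x y = r :=
  cosh_inj_nonneg (dh_nonneg x y) hr h

lemma eq_of_cosh_dh_eq_one {x y : EuclideanSpace ℝ (Fin n)}
    (h : Real.cosh (dh x y) = 1) : x = y := by
  rw [cosh_dh] at h
  have h' : br x * br y = 1 + (inner ℝ x y : ℝ) := by linarith
  have hsq : (1 + ‖x‖ ^ 2) * (1 + ‖y‖ ^ 2) = (1 + (inner ℝ x y : ℝ)) ^ 2 := by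
    rw [← br_sq, ← br_sq, ← mul_pow, h']
  have hcs : (inner ℝ x y : ℝ) * (inner ℝ x y : ℝ) ≤ (inner ℝ x x : ℝ) * (inner ℝ y y : ℝ) :=
    real_inner_mul_inner_self_le x y
  rw [real_inner_self_eq_norm_sq, real_inner_self_eq_norm_sq] at hcs
  have hnorm : ‖x - y‖ ^ 2 = ‖x‖ ^ 2 - 2 * (inner ℝ x y : ℝ) + ‖y‖ ^ 2 :=
    norm_sub_sq_real x y
  have : ‖x - y‖ ^ 2 ≤ 0 := by nlinarith
  have : x - y = 0 := by
    have := sq_nonneg ‖x - y‖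
    have hz : ‖x - y‖ ^ 2 = 0 := le_antisymm ‹_› ‹_›
    simpa [pow_eq_zero_iff] using norm_eq_zero.1 (by nlinarith [norm_nonneg (x - y)])
  exact sub_eq_zero.1 this

lemma br_midpoint {x z : EuclideanSpace ℝ (Fin n)} {d : ℝ}
    (hd : Real.cosh (dh x z) = Real.cosh (2 * d)) :
    br ((2 * Real.cosh d)⁻¹ • (x + z)) = (br x + br z) / (2 * Real.cosh d) := by
  have hcd : 0 < Real.cosh d := Real.cosh_pos d
  have hxz : br x * br z - (inner ℝ x z : ℝ) = 2 * Real.cosh d ^ 2 - 1 := by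
    rw [← cosh_dh x z, hd, Real.cosh_two_mul, Real.cosh_sq]; ring
  have hnadd : ‖x + z‖ ^ 2 = ‖x‖ ^ 2 + 2 * (inner ℝ x z : ℝ) + ‖z‖ ^ 2 :=
    norm_add_sq_real x z
  have hnM : ‖(2 * Real.cosh d)⁻¹ • (x + z)‖ ^ 2 =
      ((2 * Real.cosh d)⁻¹) ^ 2 * ‖x + z‖ ^ 2 := by
    rw [norm_smul, mul_pow, Real.norm_eq_abs, sq_abs]
  have hbx := br_sq x
  have hbz := br_sq z
  have hbx' := (br_pos x).le
  have hbz' := (br_pos z).le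
  rw [br, hnM]
  have key : 1 + ((2 * Real.cosh d)⁻¹) ^ 2 * ‖x + z‖ ^ 2 =
      ((br x + br z) / (2 * Real.cosh d)) ^ 2 := by
    field_simp
    nlinarith [hnadd]
  rw [key, Real.sqrt_sq (by positivity)]

lemma median {x z : EuclideanSpace ℝ (Fin n)} {d : ℝ}
    (hd : Real.cosh (dh x z) = Real.cosh (2 * d)) (p : EuclideanSpace ℝ (Fin n)) :
    Real.cosh (dh p ((2 * Real.cosh d)⁻¹ • (x + z))) =
      (Real.cosh (dh p x) + Real.cosh (dh p z)) / (2 * Real.cosh d) := by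
  have hcd : 0 < Real.cosh d := Real.cosh_pos d
  rw [cosh_dh, cosh_dh, cosh_dh, br_midpoint hd, real_inner_smul_right, inner_add_right]
  field_simp
  ring

lemma dh_symm (x y : EuclideanSpace ℝ (Fin n)) : dh x y = dh y x := by
  rw [dh, dh, real_inner_comm, mul_comm]

lemma br_zero : br (0 : EuclideanSpace ℝ (Fin n)) = 1 := by
  simp [br]

lemma br_smul {e : EuclideanSpace ℝ (Fin n)} (he : ‖e‖ = 1) (t : ℝ) :
    br (t • e) = Real.sqrt (1 + t ^ 2) := by
  rw [br, norm_smul, he, mul_one, Real.norm_eq_abs, sq_abs]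

lemma br_smul_sinh {e : EuclideanSpace ℝ (Fin n)} (he : ‖e‖ = 1) (a : ℝ) :
    br (Real.sinh a • e) = Real.cosh a := by
  rw [br_smul he, ← Real.cosh_sq', Real.sqrt_sq (Real.cosh_pos a).le]

noncomputable def psi (a : ℝ) : ℝ := arcosh (Real.cosh a ^ 2)

lemma one_le_cosh_sq (a : ℝ) : 1 ≤ Real.cosh a ^ 2 := by
  nlinarith [Real.one_le_cosh a]

lemma cosh_psi (a : ℝ) : Real.cosh (psi a) = Real.cosh a ^ 2 :=
  cosh_arcosh (one_le_cosh_sq a)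

lemma psi_nonneg (a : ℝ) : 0 ≤ psi a := arcosh_nonneg (one_le_cosh_sq a)

lemma psi_lower {R : ℝ} (hR : 1 ≤ R) : 2 * R - Real.log 2 < psi R := by
  have hA : 0 < Real.exp (2 * R) := Real.exp_pos _
  have hA3 : 3 ≤ Real.exp (2 * R) := by
    have := Real.add_one_le_exp (2 * R)
    linarith
  have hmul : Real.exp R * Real.exp R = Real.exp (2 * R) := by
    rw [← Real.exp_add]; ring_nf
  have hinv : Real.exp R * Real.exp (-R) = 1 := by
    rw [← Real.exp_add]; simp
  have hinv2 : Real.exp (2 * R) * Real.exp (-(2 * R)) = 1 := by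
    rw [← Real.exp_add]; simp
  have hlt : Real.cosh (2 * R - Real.log 2) < Real.cosh R ^ 2 := by
    rw [Real.cosh_eq, Real.cosh_eq, Real.exp_sub, Real.exp_log (by norm_num : (0:ℝ) < 2),
      neg_sub, Real.exp_sub, Real.exp_log (by norm_num : (0:ℝ) < 2), Real.exp_neg]
    have hER : 0 < Real.exp R := Real.exp_pos R
    rw [div_pow]
    rw [div_lt_div_iff₀ (by norm_num) (by norm_num), div_add_div _ _ (by norm_num : (2:ℝ) ≠ 0) hA.ne',
      div_mul_eq_mul_div, div_lt_iff₀ (by positivity)]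
    have hEi : Real.exp R * (Real.exp R)⁻¹ = 1 := mul_inv_cancel₀ hER.ne'
    nlinarith [hmul, hA3, hA, hEi, hER]
  rw [← cosh_psi R] at hlt
  have habs := Real.cosh_lt_cosh.1 hlt
  have h2 : 2 * R - Real.log 2 ≤ |2 * R - Real.log 2| := le_abs_self _
  rw [abs_of_nonneg (psi_nonneg R)] at habs
  linarith

lemma psi_one_lt : psi 1 < 2 := by
  have hc1 : 1 < Real.cosh 1 := by
    have := Real.cosh_lt_cosh (x := 0) (y := 1)
    simp at this
    simpa [Real.cosh_zero] using this
  have h2 : Real.cosh 2 = 2 * Real.cosh 1 ^ 2 - 1 := by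
    have := Real.cosh_two_mul 1
    have hs := Real.cosh_sq (1 : ℝ)
    norm_num at this
    nlinarith
  have hlt : Real.cosh (psi 1) < Real.cosh 2 := by
    rw [cosh_psi]
    nlinarith
  have habs := Real.cosh_lt_cosh.1 hlt
  rw [abs_of_nonneg (psi_nonneg 1)] at habs
  calc psi 1 ≤ |psi 1| := le_abs_self _
    _ < _ := by rw [abs_of_nonneg (psi_nonneg 1)]; simpa using habs

lemma scaling_contra {b : ℝ} (hb : 1 < b)
    (h : ∀ a : ℝ, 0 < a → psi (b * a) = b * psi a) : False := by
  have hb0 : 0 < b := by linarith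
  have key : ∀ k : ℕ, psi (b ^ k) = b ^ k * psi 1 := by
    intro k
    induction k with
    | zero => simp
    | succ k ih =>
      rw [pow_succ, mul_comm (b ^ k) b, h _ (by positivity), ih]
      ring
  have hb1 : ∀ k : ℕ, (1 : ℝ) ≤ b ^ k := fun k => one_le_pow₀ hb.le
  have hε : 0 < 2 - psi 1 := by linarith [psi_one_lt]
  have hbound : ∀ k : ℕ, b ^ k * (2 - psi 1) < Real.log 2 := by
    intro k
    have hl := psi_lower (hb1 k)
    rw [key k] at hl
    nlinarith
  obtain ⟨k, hk⟩ := pow_unbounded_of_one_lt (Real.log 2 / (2 - psi 1)) hb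
  have := hbound k
  rw [div_lt_iff₀ hε] at hk
  linarith

end Aux

set_option maxHeartbeats 1000000 in
theorem dh_dilation_is_isometry {n : ℕ} (hn : 1 < n)
    (u : EuclideanSpace ℝ (Fin n) → EuclideanSpace ℝ (Fin n)) (c : ℝ) (hc : 0 < c)
    (hu : ∀ x y, dh (u x) (u y) = c * dh x y) : c = 1 := by
  by_contra hne
  have h0n : 0 < n := by omega
  have h1n : 1 < n := hn
  set e1 : EuclideanSpace ℝ (Fin n) := EuclideanSpace.single ⟨0, h0n⟩ (1:ℝ) with he1
  set e2 : EuclideanSpace ℝ (Fin n) := EuclideanSpace.single ⟨1, h1n⟩ (1:ℝ) with he2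
  have hne1 : ‖e1‖ = 1 := by simp [he1]
  have hne2 : ‖e2‖ = 1 := by simp [he2]
  have h11 : (inner ℝ e1 e1 : ℝ) = 1 := by
    simp [he1, EuclideanSpace.inner_single_left, EuclideanSpace.single_apply]
  have h21 : (inner ℝ e2 e1 : ℝ) = 0 := by
    rw [he1, he2, EuclideanSpace.inner_single_left]
    simp [EuclideanSpace.single_apply, Fin.ext_iff]
  have feq : ∀ a : ℝ, 0 < a → psi (c * a) = c * psi a := by
    intro a ha
    set s := Real.sinh a with hs
    set x := s • e1 with hx
    set z := (-s) • e1 with hz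
    set p := s • e2 with hp
    set m := (0 : EuclideanSpace ℝ (Fin n)) with hm
    have hbx : br x = Real.cosh a := br_smul_sinh hne1 a
    have hbz : br z = Real.cosh a := by
      have hz' : z = Real.sinh (-a) • e1 := by rw [hz, Real.sinh_neg, hs]
      rw [hz', br_smul_sinh hne1, Real.cosh_neg]
    have hbp : br p = Real.cosh a := br_smul_sinh hne2 a
    have hixz : (inner ℝ x z : ℝ) = -(s ^ 2) := by
      rw [hx, hz, real_inner_smul_left, real_inner_smul_right, h11]; ring
    have hipx : (inner ℝ p x : ℝ) = 0 := by
      rw [hp, hx, real_inner_smul_left, real_inner_smul_right, h21]; ring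
    have hipz : (inner ℝ p z : ℝ) = 0 := by
      rw [hp, hz, real_inner_smul_left, real_inner_smul_right, h21]; ring
    have hdxz : dh x z = 2 * a := by
      apply dh_eq_of_cosh (by positivity)
      rw [cosh_dh, hbx, hbz, hixz, Real.cosh_two_mul, Real.sinh_sq]
      ring
    have hdxm : dh x m = a := by
      apply dh_eq_of_cosh ha.le
      rw [cosh_dh, hbx, hm, br_zero, inner_zero_right]; ring
    have hdzm : dh z m = a := by
      apply dh_eq_of_cosh ha.le
      rw [cosh_dh, hbz, hm, br_zero, inner_zero_right]; ring
    have hdpm : dh p m = a := by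
      apply dh_eq_of_cosh ha.le
      rw [cosh_dh, hbp, hm, br_zero, inner_zero_right]; ring
    have hdpx : dh p x = psi a := by
      apply dh_eq_of_cosh (psi_nonneg a)
      rw [cosh_dh, hbp, hbx, hipx, cosh_psi]; ring
    have hdpz : dh p z = psi a := by
      apply dh_eq_of_cosh (psi_nonneg a)
      rw [cosh_dh, hbp, hbz, hipz, cosh_psi]; ring
    have hca : 0 < Real.cosh (c * a) := Real.cosh_pos _
    have hd : Real.cosh (dh (u x) (u z)) = Real.cosh (2 * (c * a)) := by
      rw [hu x z, hdxz]; ring_nf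
    have hum : u m = (2 * Real.cosh (c * a))⁻¹ • (u x + u z) := by
      apply eq_of_cosh_dh_eq_one
      rw [median hd (u m)]
      have e1' : dh (u m) (u x) = c * a := by rw [hu m x, dh_symm m x, hdxm]
      have e2' : dh (u m) (u z) = c * a := by rw [hu m z, dh_symm m z, hdzm]
      rw [e1', e2']
      field_simp
      ring
    have h1 := median hd (u p)
    rw [← hum, hu p m, hu p x, hu p z, hdpx, hdpz, hdpm,
      eq_div_iff (by positivity)] at h1
    have hmain : Real.cosh (c * a) ^ 2 = Real.cosh (c * psi a) := by
      nlinarith [h1]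
    apply cosh_inj_nonneg (psi_nonneg _) (mul_nonneg hc.le (psi_nonneg a))
    rw [cosh_psi, hmain]
  rcases lt_or_gt_of_ne hne with hlt | hgt
  · have hb : 1 < c⁻¹ := (one_lt_inv₀ hc).2 hlt
    apply scaling_contra hb
    intro a ha
    have h := feq (c⁻¹ * a) (by positivity)
    rw [← mul_assoc, mul_inv_cancel₀ hc.ne', one_mul] at h
    rw [h]
    field_simp
  · exact scaling_contra hgt feq
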